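/- Let (V, g) be a finite-dimensional real inner product space, J₀ a g-compatible complex structure on V, and A ∈ SO(V, g) (a linear isometry of g with det A = 1). Set J := A∘J₀∘A⁻¹ (so J is a g-compatible complex structure inducing the same orientation as J₀). Then det((J + J₀)/2) ≥ 0. -/
import Mathlib


open scoped RealInnerProductSpace

/-- A skew-adjoint endomorphism of a finite-dimensional real inner product space has
nonnegative determinant. -/
theorem det_nonneg_of_skew_adjoint
    {V : Type*} [NormedAddCommGroup V] [InnerProductSpace ℝ V] [FiniteDimensional ℝ V]
    (T : V →ₗ[ℝ] V) (hT : ∀ x y : V, ⟪T x, y⟫ = -⟪x, T y⟫) :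
    0 ≤ LinearMap.det T := by
  classical
  -- ⟪T x, x⟫ = 0 for all x
  have hTx : ∀ x : V, ⟪T x, x⟫ = 0 := by
    intro x
    have h := hT x x
    have hs : ⟪T x, x⟫ = ⟪x, T x⟫ := real_inner_comm _ _
    linarith
  -- for any s, s • T + id is injective
  have hinj : ∀ s : ℝ, Function.Injective (s • T + LinearMap.id (R := ℝ) (M := V)) := by
    intro s
    rw [injective_iff_map_eq_zero]
    intro x hx
    simp only [LinearMap.add_apply, LinearMap.smul_apply, LinearMap.id_apply] at hx
    have h1 : ⟪s • T x + x, x⟫ = 0 := by rw [hx]; simp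
    rw [inner_add_left, real_inner_smul_left, hTx] at h1
    have : ⟪x, x⟫ = 0 := by linarith
    exact inner_self_eq_zero.mp this
  have hne : ∀ s : ℝ, LinearMap.det (s • T + LinearMap.id (R := ℝ) (M := V)) ≠ 0 := by
    intro s h0
    have := LinearMap.bot_lt_ker_of_det_eq_zero h0
    rw [LinearMap.ker_eq_bot.mpr (hinj s)] at this
    exact lt_irrefl _ this
  -- continuity of s ↦ det (s • T + id)
  set n := Module.finrank ℝ V with hn
  let b := Module.finBasis ℝ V
  have hdet : ∀ s : ℝ, LinearMap.det (s • T + LinearMap.id (R := ℝ) (M := V)) =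
      (s • LinearMap.toMatrix b b T + 1).det := by
    intro s
    rw [← LinearMap.det_toMatrix b, map_add, map_smul, LinearMap.toMatrix_id]
  have hcont : Continuous fun s : ℝ =>
      LinearMap.det (s • T + LinearMap.id (R := ℝ) (M := V)) := by
    simp only [hdet]
    exact Continuous.matrix_det ((continuous_id.smul continuous_const).add continuous_const)
  -- by IVT, since value at 0 is 1 and never zero, det (s • T + id) > 0 everywhere
  have h0 : LinearMap.det ((0 : ℝ) • T + LinearMap.id (R := ℝ) (M := V)) = 1 := by
    simp
  have hpos : ∀ s : ℝ, 0 < LinearMap.det (s • T + LinearMap.id (R := ℝ) (M := V)) := by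
    intro s
    by_contra hle
    push_neg at hle
    have hlt : LinearMap.det (s • T + LinearMap.id (R := ℝ) (M := V)) < 0 :=
      lt_of_le_of_ne hle (hne s)
    -- IVT between s and 0
    have hmem : (0:ℝ) ∈ Set.Icc (LinearMap.det (s • T + LinearMap.id (R := ℝ) (M := V)))
        (LinearMap.det ((0:ℝ) • T + LinearMap.id (R := ℝ) (M := V))) := by
      rw [h0]; exact ⟨hlt.le, zero_le_one⟩
    rcases le_total s 0 with hs | hs
    · obtain ⟨c, _, hc⟩ := intermediate_value_Icc hs (hcont.continuousOn) hmem
      exact hne c hc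
    · obtain ⟨c, _, hc⟩ := intermediate_value_Icc' hs (hcont.continuousOn) hmem
      exact hne c hc
  -- now det (T + t • id) = t ^ n * det ((1/t) • T + id) > 0 for t > 0
  have hpos' : ∀ t : ℝ, 0 < t →
      0 < LinearMap.det (T + t • LinearMap.id (R := ℝ) (M := V)) := by
    intro t ht
    have hkey : T + t • LinearMap.id (R := ℝ) (M := V) =
        t • (t⁻¹ • T + LinearMap.id (R := ℝ) (M := V)) := by
      rw [smul_add, smul_smul, mul_inv_cancel₀ ht.ne', one_smul]
    rw [hkey, LinearMap.det_smul]
    exact mul_pos (pow_pos ht _) (hpos t⁻¹)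
  -- continuity of t ↦ det (T + t • id) at 0 plus positivity on right gives det T ≥ 0
  have hcont2 : Continuous fun t : ℝ =>
      LinearMap.det (T + t • LinearMap.id (R := ℝ) (M := V)) := by
    have : ∀ t : ℝ, LinearMap.det (T + t • LinearMap.id (R := ℝ) (M := V)) =
        (LinearMap.toMatrix b b T + t • 1).det := by
      intro t
      rw [← LinearMap.det_toMatrix b, map_add, map_smul, LinearMap.toMatrix_id]
    simp only [this]
    exact Continuous.matrix_det (continuous_const.add (continuous_id.smul continuous_const))
  have htend : Filter.Tendsto (fun t : ℝ =>
      LinearMap.det (T + t • LinearMap.id (R := ℝ) (M := V))) (nhdsWithin 0 (Set.Ioi 0))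
      (nhds (LinearMap.det T)) := by
    have h := (hcont2.tendsto 0).mono_left (nhdsWithin_le_nhds (s := Set.Ioi (0:ℝ)))
    simpa using h
  refine ge_of_tendsto htend ?_
  filter_upwards [self_mem_nhdsWithin] with t ht
  exact (hpos' t ht).le

/-- Let `(V, g)` be a finite-dimensional real inner product space, `J₀` a
`g`-compatible complex structure on `V`, and `A ∈ SO(V, g)` (a linear isometry with `det A = 1`).
Set `J := A ∘ J₀ ∘ A⁻¹`.  Then `det ((J + J₀)/2) ≥ 0`. -/
theorem det_halfSum_nonneg_of_so_conjugate
    {V : Type*} [NormedAddCommGroup V] [InnerProductSpace ℝ V] [FiniteDimensional ℝ V]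
    (J₀ : V →ₗ[ℝ] V)
    (hJ₀ : J₀ ∘ₗ J₀ = -LinearMap.id)
    (hJ₀g : ∀ x y : V, ⟪J₀ x, J₀ y⟫ = ⟪x, y⟫)
    (A : V ≃ₗ[ℝ] V)
    (hAg : ∀ x y : V, ⟪A x, A y⟫ = ⟪x, y⟫)
    (hAdet : LinearMap.det (A : V →ₗ[ℝ] V) = 1) :
    0 ≤ LinearMap.det
      ((2 : ℝ)⁻¹ • ((A : V →ₗ[ℝ] V) ∘ₗ J₀ ∘ₗ (A.symm : V →ₗ[ℝ] V) + J₀)) := by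
  -- J₀ is skew-adjoint
  have hJ₀sq : ∀ x : V, J₀ (J₀ x) = -x := by
    intro x
    have := congrArg (fun f => f x) hJ₀
    simpa using this
  have hJ₀skew : ∀ x y : V, ⟪J₀ x, y⟫ = -⟪x, J₀ y⟫ := by
    intro x y
    have h := hJ₀g x (J₀ y)
    rw [hJ₀sq y] at h
    rw [inner_neg_right] at h
    linarith
  -- the conjugated map is skew-adjoint
  have hJskew : ∀ x y : V,
      ⟪((A : V →ₗ[ℝ] V) ∘ₗ J₀ ∘ₗ (A.symm : V →ₗ[ℝ] V)) x, y⟫ =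
        -⟪x, ((A : V →ₗ[ℝ] V) ∘ₗ J₀ ∘ₗ (A.symm : V →ₗ[ℝ] V)) y⟫ := by
    intro x y
    simp only [LinearMap.comp_apply, LinearEquiv.coe_coe]
    calc ⟪A (J₀ (A.symm x)), y⟫
        = ⟪A (J₀ (A.symm x)), A (A.symm y)⟫ := by rw [A.apply_symm_apply]
      _ = ⟪J₀ (A.symm x), A.symm y⟫ := hAg _ _
      _ = -⟪A.symm x, J₀ (A.symm y)⟫ := hJ₀skew _ _
      _ = -⟪A (A.symm x), A (J₀ (A.symm y))⟫ := by rw [hAg]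
      _ = -⟪x, A (J₀ (A.symm y))⟫ := by rw [A.apply_symm_apply]
  apply det_nonneg_of_skew_adjoint
  intro x y
  simp only [LinearMap.smul_apply, LinearMap.add_apply]
  rw [real_inner_smul_left, real_inner_smul_right, inner_add_left, inner_add_right,
    hJskew x y, hJ₀skew x y]
  ring
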